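/- Let n ≥ 1 and let F ⊆ ℕⁿ be a nonempty finite set, with Newton polyhedron Γ₊ the convex hull in ℝⁿ of ⋃_{ν∈F} ({ν} + [0,∞)ⁿ). Then (1,1,…,1) lies in the interior of Γ₊ if and only if m(a) < s(a) for every nonzero a ∈ [0,∞)ⁿ, where m(a) = min_{ν∈F} ⟨a,ν⟩ and s(a) = a₁ + ⋯ + aₙ. -/

import Mathlib

open scoped Pointwise

private lemma newton_lin_map (n : ℕ) (a : Fin n → ℝ) :
    IsLinearMap ℝ (fun x : Fin n → ℝ => ∑ i, a i * x i) := by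
  constructor
  · intro x y
    simp [Pi.add_apply, mul_add, Finset.sum_add_distrib]
  · intro c x
    simp [Finset.mul_sum, mul_left_comm]

/-- `(1,…,1)` lies in the interior of the Newton polyhedron `Γ₊` of a nonempty
finite support `F ⊆ ℕⁿ` if and only if `m(a) < s(a)` for every nonzero
`a ≥ 0`. -/
theorem newton_one_mem_interior_iff (n : ℕ) (hn : 1 ≤ n)
    (F : Finset (Fin n → ℕ)) (hF : F.Nonempty)
    (Γ : Set (Fin n → ℝ))
    (hΓ : Γ = convexHull ℝ (⋃ ν ∈ F,
      (({fun i => (ν i : ℝ)} : Set (Fin n → ℝ)) +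
        {x : Fin n → ℝ | ∀ i, 0 ≤ x i}))) :
    (fun _ => (1 : ℝ)) ∈ interior Γ ↔
      ∀ a : Fin n → ℝ, a ≠ 0 → (∀ i, 0 ≤ a i) →
        (F.inf' hF fun ν => ∑ i, a i * (ν i : ℝ)) < ∑ i, a i := by
  set U : Set (Fin n → ℝ) := ⋃ ν ∈ F,
      (({fun i => (ν i : ℝ)} : Set (Fin n → ℝ)) +
        {x : Fin n → ℝ | ∀ i, 0 ≤ x i}) with hU
  -- membership in U
  have hmemU : ∀ (ν : Fin n → ℕ), ν ∈ F → ∀ c : Fin n → ℝ, (∀ i, 0 ≤ c i) →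
      (fun i => (ν i : ℝ) + c i) ∈ U := by
    intro ν hν c hc
    refine Set.mem_biUnion hν ?_
    exact ⟨(fun i => (ν i : ℝ)), rfl, c, hc, by ext i; simp⟩
  -- lower bound on the convex hull
  have hlow : ∀ a : Fin n → ℝ, (∀ i, 0 ≤ a i) → ∀ x ∈ convexHull ℝ U,
      (F.inf' hF fun ν => ∑ i, a i * (ν i : ℝ)) ≤ ∑ i, a i * x i := by
    intro a ha
    set m := F.inf' hF fun ν => ∑ i, a i * (ν i : ℝ) with hm
    have : convexHull ℝ U ⊆ {x | m ≤ ∑ i, a i * x i} := by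
      apply convexHull_min
      · rintro x hx
        simp only [hU, Set.mem_iUnion] at hx
        obtain ⟨ν, hν, hx⟩ := hx
        rw [Set.mem_add] at hx
        obtain ⟨u, hu, c, hc, rfl⟩ := hx
        simp only [Set.mem_singleton_iff] at hu
        subst hu
        have h1 : m ≤ ∑ i, a i * (ν i : ℝ) := Finset.inf'_le _ hν
        have h2 : (0:ℝ) ≤ ∑ i, a i * c i :=
          Finset.sum_nonneg fun i _ => mul_nonneg (ha i) (hc i)
        have h3 : ∑ i, a i * ((fun i => (ν i : ℝ)) + c) i
            = (∑ i, a i * (ν i : ℝ)) + ∑ i, a i * c i := by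
          simp [Pi.add_apply, mul_add, Finset.sum_add_distrib]
        simp only [Set.mem_setOf_eq, h3]
        linarith
      · exact convex_halfSpace_ge (newton_lin_map n a) m
    intro x hx
    exact this hx
  subst hΓ

  constructor
  · -- forward direction
    intro h1 a ha h0
    -- find t > 0 with (1 - t•a) ∈ Γ
    have hcont : Continuous fun t : ℝ => (fun i => 1 - t * a i : Fin n → ℝ) := by
      refine continuous_pi fun i => ?_
      exact continuous_const.sub (continuous_id.mul continuous_const)
    have hpre : (fun t : ℝ => (fun i => 1 - t * a i : Fin n → ℝ)) ⁻¹'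
        interior (convexHull ℝ U) ∈ nhds (0:ℝ) := by
      apply (isOpen_interior.preimage hcont).mem_nhds
      simpa using h1
    obtain ⟨ε, hε, hball⟩ := Metric.mem_nhds_iff.1 hpre
    set t := ε / 2 with ht
    have htpos : 0 < t := by positivity
    have htmem : (fun i => 1 - t * a i : Fin n → ℝ) ∈ convexHull ℝ U := by
      have : t ∈ Metric.ball (0:ℝ) ε := by
        simp only [Metric.mem_ball, Real.dist_eq, sub_zero]
        rw [abs_of_pos htpos]
        linarith
      exact interior_subset (hball this)
    have hkey := hlow a h0 _ htmem
    have hsum : ∑ i, a i * (1 - t * a i) = (∑ i, a i) - t * ∑ i, a i * a i := by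
      rw [Finset.mul_sum, ← Finset.sum_sub_distrib]
      exact Finset.sum_congr rfl fun i _ => by ring
    rw [hsum] at hkey
    have hpos : 0 < ∑ i, a i * a i := by
      obtain ⟨j, hj⟩ := Function.ne_iff.1 ha
      have haj : 0 < a j := lt_of_le_of_ne (h0 j) (Ne.symm hj)
      refine Finset.sum_pos' (fun i _ => mul_nonneg (h0 i) (h0 i)) ?_
      exact ⟨j, Finset.mem_univ j, mul_pos haj haj⟩
    nlinarith
  · -- backward direction
    intro H
    by_contra h1
    obtain ⟨ν₀, hν₀⟩ := hF
    -- interior of Γ is nonempty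
    have hVsub : Set.univ.pi (fun i => Set.Ioi ((ν₀ i : ℝ))) ⊆ convexHull ℝ U := by
      intro x hx
      simp only [Set.mem_pi, Set.mem_univ, Set.mem_Ioi, forall_true_left] at hx
      apply subset_convexHull
      have := hmemU ν₀ hν₀ (fun i => x i - (ν₀ i : ℝ))
        (fun i => by simpa using sub_nonneg.2 (hx i).le)
      simpa using this
    have hVopen : IsOpen (Set.univ.pi (fun i => Set.Ioi ((ν₀ i : ℝ)))) :=
      isOpen_set_pi Set.finite_univ (fun i _ => isOpen_Ioi)
    have hVne : ((fun i => (ν₀ i : ℝ) + 1) : Fin n → ℝ) ∈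
        Set.univ.pi (fun i => Set.Ioi ((ν₀ i : ℝ))) := by
      simp
    have hIntNe : ((fun i => (ν₀ i : ℝ) + 1) : Fin n → ℝ) ∈
        interior (convexHull ℝ U) :=
      interior_mono hVsub (by rw [hVopen.interior_eq]; exact hVne)
    -- separate
    obtain ⟨f, hf⟩ := geometric_hahn_banach_open_point
      ((convex_convexHull ℝ U).interior) isOpen_interior h1
    -- f x ≤ f 1 on all of Γ
    have hfle : ∀ x ∈ convexHull ℝ U, f x ≤ f (fun _ => (1:ℝ)) := by
      intro x hx
      set y₀ : Fin n → ℝ := fun i => (ν₀ i : ℝ) + 1 with hy₀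
      have hfx : ∀ t : ℝ, t ∈ Set.Ioc (0:ℝ) 1 →
          f x + t * (f y₀ - f x) < f (fun _ => (1:ℝ)) := by
        intro t htt
        have := hf _ ((convex_convexHull ℝ U).add_smul_sub_mem_interior hx hIntNe htt)
        simpa [map_add, map_smul, map_sub, smul_eq_mul, mul_sub] using this
      have htend : Filter.Tendsto (fun t : ℝ => f x + t * (f y₀ - f x))
          (nhdsWithin 0 (Set.Ioi 0)) (nhds (f x)) := by
        have : Filter.Tendsto (fun t : ℝ => f x + t * (f y₀ - f x))
            (nhds 0) (nhds (f x + 0 * (f y₀ - f x))) := by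
          exact (continuous_const.add (continuous_id.mul continuous_const)).tendsto 0
        simpa using this.mono_left nhdsWithin_le_nhds
      refine le_of_tendsto htend ?_
      filter_upwards [Ioc_mem_nhdsGT (zero_lt_one)] with t htt
      exact (hfx t htt).le
    -- define the vector a
    set a : Fin n → ℝ := fun i => -(f (fun j => if i = j then 1 else 0)) with hadef
    have hfx_eq : ∀ x : Fin n → ℝ, f x = -∑ i, a i * x i := by
      intro x
      have h := LinearMap.pi_apply_eq_sum_univ (f : (Fin n → ℝ) →ₗ[ℝ] ℝ) x
      simp only [ContinuousLinearMap.coe_coe] at h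
      rw [h, ← Finset.sum_neg_distrib]
      exact Finset.sum_congr rfl fun i _ => by simp [hadef]; ring
    -- a is nonnegative
    have hage : ∀ i, 0 ≤ a i := by
      intro i
      by_contra hlt
      push_neg at hlt
      -- use points ν₀ + t e_i
      have hmem : ∀ t : ℝ, 0 ≤ t →
          (fun j => (ν₀ j : ℝ) + (if i = j then t else 0)) ∈ convexHull ℝ U := by
        intro t htt
        exact subset_convexHull ℝ U
          (hmemU ν₀ hν₀ (fun j => if i = j then t else 0)
            (fun j => by by_cases h : i = j <;> simp [h, htt]))
      have hval : ∀ t : ℝ, 0 ≤ t →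
          (∑ j, a j) ≤ (∑ j, a j * (ν₀ j : ℝ)) + t * a i := by
        intro t htt
        have hle := hfle _ (hmem t htt)
        rw [hfx_eq, hfx_eq] at hle
        beta_reduce at hle
        have hsum : ∑ j, a j * ((ν₀ j : ℝ) + (if i = j then t else 0))
            = (∑ j, a j * (ν₀ j : ℝ)) + t * a i := by
          have hpt : ∀ j, a j * ((ν₀ j : ℝ) + (if i = j then t else 0))
              = a j * (ν₀ j : ℝ) + (if i = j then t * a i else 0) := by
            intro j
            by_cases h : i = j
            · subst h; simp; ring
            · simp [h]
          simp only [hpt, Finset.sum_add_distrib, Finset.sum_ite_eq,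
            Finset.mem_univ, if_true]
        rw [hsum] at hle
        simp only [mul_one] at hle
        linarith [hle]
      have h0' := hval 0 le_rfl
      set B := (∑ j, a j * (ν₀ j : ℝ)) - (∑ j, a j) with hB
      have hBnn : 0 ≤ B := by simp only [hB]; linarith
      have ht0 : (0:ℝ) ≤ (B + 1) / (-(a i)) := div_nonneg (by linarith) (by linarith)
      have h2 := hval _ ht0
      have h3 : (B + 1) / (-(a i)) * a i = -(B + 1) := by
        have hne : (-(a i)) ≠ 0 := by linarith
        field_simp
        rw [div_self (neg_ne_zero.1 hne)]
      rw [h3] at h2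
      linarith [hB]
    -- a is nonzero
    have hane : a ≠ 0 := by
      intro h0
      have hzero : ∀ x : Fin n → ℝ, f x = 0 := by
        intro x; rw [hfx_eq, h0]; simp
      have := hf _ hIntNe
      rw [hzero, hzero] at this
      exact lt_irrefl _ this
    -- each vertex gives s(a) ≤ ⟨a, ν⟩
    have hge : (∑ i, a i) ≤ F.inf' ⟨ν₀, hν₀⟩ fun ν => ∑ i, a i * (ν i : ℝ) := by
      apply Finset.le_inf'
      intro ν hν
      have hmem : ((fun i => (ν i : ℝ)) : Fin n → ℝ) ∈ convexHull ℝ U := by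
        have := hmemU ν hν (fun _ => 0) (fun _ => le_rfl)
        simpa using subset_convexHull ℝ U this
      have hle := hfle _ hmem
      rw [hfx_eq, hfx_eq] at hle
      beta_reduce at hle
      simp only [mul_one] at hle
      linarith
    have := H a hane hage
    linarith
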